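/- Let f : C → D be a surjective morphism of combinatorial codes, and suppose C and D have the same (finite) number of trunks. Then f is a bijection, and moreover f induces a bijection between the trunks of C and the trunks of D via preimage. -/
import Mathlib


/-- The trunk of `σ` in the code `C`. -/
def Tk {n : ℕ} (C : Set (Finset (Fin n))) (σ : Finset (Fin n)) : Set (Finset (Fin n)) :=
  {c ∈ C | σ ⊆ c}

/-- `T` is a trunk in the code `C`. -/
def IsTrunk {n : ℕ} (C T : Set (Finset (Fin n))) : Prop :=
  T = ∅ ∨ ∃ σ, T = Tk C σ

/-- `f` is a morphism from the code `C` to the code `D`. -/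
def IsMorphismOn {n m : ℕ} (C : Set (Finset (Fin n))) (D : Set (Finset (Fin m)))
    (f : Finset (Fin n) → Finset (Fin m)) : Prop :=
  (∀ c ∈ C, f c ∈ D) ∧ ∀ T, IsTrunk D T → IsTrunk C (C ∩ f ⁻¹' T)

/-- Proposition 3.12: a surjective morphism `f : C → D` between codes with equally many
trunks is a bijection, and taking preimages is a bijection from the trunks of `D` to the
trunks of `C`. -/
theorem surjective_equal_trunks_isom {n m : ℕ} (C : Set (Finset (Fin n)))
    (D : Set (Finset (Fin m))) (f : Finset (Fin n) → Finset (Fin m))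
    (hf : IsMorphismOn C D f) (hsurj : D ⊆ f '' C)
    (hcard : {T | IsTrunk C T}.ncard = {T | IsTrunk D T}.ncard) :
    Set.BijOn f C D ∧
      Set.BijOn (fun T => C ∩ f ⁻¹' T) {T | IsTrunk D T} {T | IsTrunk C T} := by
  obtain ⟨hmaps, htrunk⟩ := hf
  have trunkSub : ∀ T, IsTrunk D T → T ⊆ D := by
    rintro T (rfl | ⟨σ, rfl⟩)
    · exact Set.empty_subset _
    · exact fun x hx => hx.1
  have hMapsΦ : Set.MapsTo (fun T => C ∩ f ⁻¹' T) {T | IsTrunk D T} {T | IsTrunk C T} :=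
    fun T hT => htrunk T hT
  have hInjΦ : Set.InjOn (fun T => C ∩ f ⁻¹' T) {T | IsTrunk D T} := by
    intro T hT T' hT' h
    simp only at h
    ext d
    constructor
    · intro hd
      obtain ⟨c, hc, rfl⟩ := hsurj (trunkSub T hT hd)
      have hmem : c ∈ C ∩ f ⁻¹' T := ⟨hc, hd⟩
      rw [h] at hmem
      exact hmem.2
    · intro hd
      obtain ⟨c, hc, rfl⟩ := hsurj (trunkSub T' hT' hd)
      have hmem : c ∈ C ∩ f ⁻¹' T' := ⟨hc, hd⟩
      rw [← h] at hmem
      exact hmem.2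
  have hfinC : {T | IsTrunk C T}.Finite := Set.toFinite _
  have himg : (fun T => C ∩ f ⁻¹' T) '' {T | IsTrunk D T} = {T | IsTrunk C T} := by
    refine Set.eq_of_subset_of_ncard_le (Set.image_subset_iff.mpr hMapsΦ) ?_ hfinC
    rw [Set.ncard_image_of_injOn hInjΦ, hcard]
  have hSurjΦ : Set.SurjOn (fun T => C ∩ f ⁻¹' T) {T | IsTrunk D T} {T | IsTrunk C T} :=
    himg.symm.subset
  have hsub : ∀ c ∈ C, ∀ c' ∈ C, f c = f c' → c ⊆ c' := by
    intro c hc c' hc' hfc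
    have hCtr : Tk C c ∈ {T | IsTrunk C T} := Or.inr ⟨c, rfl⟩
    obtain ⟨T, hT, hTeq⟩ := hSurjΦ hCtr
    simp only at hTeq
    have hcmem : c ∈ C ∩ f ⁻¹' T := by
      rw [hTeq]; exact ⟨hc, subset_rfl⟩
    have hc'mem : c' ∈ C ∩ f ⁻¹' T := ⟨hc', by rw [Set.mem_preimage, ← hfc]; exact hcmem.2⟩
    rw [hTeq] at hc'mem
    exact hc'mem.2
  refine ⟨⟨hmaps, fun c hc c' hc' hfc =>
    Finset.Subset.antisymm (hsub c hc c' hc' hfc) (hsub c' hc' c hc hfc.symm),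
    fun d hd => hsurj hd⟩, hMapsΦ, hInjΦ, hSurjΦ⟩
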